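/- arXiv:2310.12863 — 2 statements merged into one kernel-verified Lean document; each statement's English description precedes it below -/
import Mathlib

section
/- For m > 2, the probability measure μ_{G_m} with cumulative distribution function G_m satisfies ∫ |x|^m dμ_{G_m}(x) = 1 + 2m. -/
open Real Filter MeasureTheory

/-- The cdf `G_m` from the paper. -/
noncomputable def G (m : ℝ) (x : ℝ) : ℝ :=
  if x ≤ -1 then (1/2) * |x| ^ (-m) * (max (Real.log |x|) 1) ^ (-2 : ℝ)
  else if x < 1 then 1/2
  else 1 - (1/2) * x ^ (-m) * (max (Real.log x) 1) ^ (-2 : ℝ)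

/-- Integrand of the layer-cake integral. -/
noncomputable def Haux (m t : ℝ) : ℝ :=
  if t ≤ 1 then 1 else t⁻¹ * (max (Real.log t / m) 1) ^ (-2 : ℝ)

lemma Gneg_small {m s : ℝ} (hs0 : 0 < s) (hs1 : s ≤ 1) : G m (-s) = 1/2 := by
  rcases eq_or_lt_of_le hs1 with rfl | h
  · simp [G, Real.log_one]
  · rw [G, if_neg (by linarith), if_pos (by linarith)]

lemma Gpos_small {m s : ℝ} (hs0 : 0 < s) (hs1 : s ≤ 1) : G m s = 1/2 := by
  rcases eq_or_lt_of_le hs1 with rfl | h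
  · norm_num [G, Real.log_one]
  · rw [G, if_neg (by linarith), if_pos (by linarith)]

lemma Gneg_big {m s : ℝ} (hs : 1 < s) :
    G m (-s) = (1/2) * s ^ (-m) * (max (Real.log s) 1) ^ (-2 : ℝ) := by
  rw [G, if_pos (by linarith), abs_neg, abs_of_pos (by linarith)]

lemma Gpos_big {m s : ℝ} (hs : 1 < s) :
    G m s = 1 - (1/2) * s ^ (-m) * (max (Real.log s) 1) ^ (-2 : ℝ) := by
  rw [G, if_neg (by linarith), if_neg (by linarith)]

lemma tail_formula (m : ℝ) (hm : 2 < m) (μ : Measure ℝ) [IsProbabilityMeasure μ]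
    (hcdf : ∀ x : ℝ, (μ (Set.Iic x)).toReal = G m x) {t : ℝ} (ht : 0 < t)
    (hpt : μ {t ^ (1/m : ℝ)} = 0) :
    μ {x : ℝ | t ≤ |x| ^ m} = ENNReal.ofReal (Haux m t) := by
  have hm0 : (0:ℝ) < m := by linarith
  set s := t ^ (1/m : ℝ) with hs_def
  have hs0 : 0 < s := Real.rpow_pos_of_pos ht _
  have hsm : s ^ m = t := by
    rw [hs_def, ← Real.rpow_mul ht.le, one_div, inv_mul_cancel₀ (by linarith), Real.rpow_one]
  have hset : {x : ℝ | t ≤ |x| ^ m} = Set.Iic (-s) ∪ Set.Ici s := by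
    ext x
    have h1 : t ≤ |x| ^ m ↔ s ≤ |x| := by
      constructor
      · intro h
        have h2 := Real.rpow_le_rpow ht.le h (by positivity : (0:ℝ) ≤ 1/m)
        rwa [← Real.rpow_mul (abs_nonneg x), mul_one_div, div_self (by linarith),
          Real.rpow_one] at h2
      · intro h
        calc t = s ^ m := hsm.symm
        _ ≤ |x| ^ m := Real.rpow_le_rpow hs0.le h hm0.le
    simp only [Set.mem_setOf_eq, h1, le_abs, Set.mem_union, Set.mem_Iic, Set.mem_Ici, le_neg]
    tauto
  have hIic : ∀ x : ℝ, μ (Set.Iic x) = ENNReal.ofReal (G m x) := fun x => by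
    rw [← hcdf x, ENNReal.ofReal_toReal (measure_ne_top μ _)]
  have hIoi : ∀ x : ℝ, μ (Set.Ioi x) = 1 - ENNReal.ofReal (G m x) := fun x => by
    rw [← Set.compl_Iic, measure_compl measurableSet_Iic (measure_ne_top μ _), measure_univ,
      hIic]
  have hIci : μ (Set.Ici s) = 1 - ENNReal.ofReal (G m s) := by
    refine le_antisymm ?_ ?_
    · calc μ (Set.Ici s) = μ ({s} ∪ Set.Ioi s) := by rw [Set.singleton_union, Set.Ioi_insert]
        _ ≤ μ {s} + μ (Set.Ioi s) := measure_union_le _ _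
        _ = μ (Set.Ioi s) := by rw [hpt, zero_add]
        _ = _ := hIoi s
    · rw [← hIoi s]; exact measure_mono Set.Ioi_subset_Ici_self
  rw [hset, measure_union (Set.Iic_disjoint_Ici.mpr (by intro h; linarith)) measurableSet_Ici,
    hIic, hIci]
  by_cases h1 : t ≤ 1
  · have hs1 : s ≤ 1 := Real.rpow_le_one ht.le h1 (by positivity)
    rw [Gneg_small hs0 hs1, Gpos_small hs0 hs1, Haux, if_pos h1]
    have h2 : (1 : ENNReal) - ENNReal.ofReal (1/2) = ENNReal.ofReal (1/2) := by
      rw [← ENNReal.ofReal_one, ← ENNReal.ofReal_sub _ (by norm_num)]; norm_num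
    rw [h2, ← ENNReal.ofReal_add (by norm_num) (by norm_num)]; norm_num
  · have ht1 : 1 < t := by linarith [not_le.mp h1]
    have hs1 : 1 < s := by
      rw [hs_def, Real.one_lt_rpow_iff_of_pos ht]
      exact Or.inl ⟨ht1, by positivity⟩
    set a := (1/2) * s ^ (-m) * (max (Real.log s) 1) ^ (-2 : ℝ) with ha_def
    have hmax : (1:ℝ) ≤ max (Real.log s) 1 := le_max_right _ _
    have hx0 : (0:ℝ) ≤ s ^ (-m) := Real.rpow_nonneg hs0.le _
    have hy0 : (0:ℝ) ≤ (max (Real.log s) 1) ^ (-2 : ℝ) := Real.rpow_nonneg (by linarith) _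
    have hx1 : s ^ (-m) ≤ 1 := Real.rpow_le_one_of_one_le_of_nonpos hs1.le (by linarith)
    have hy1 : (max (Real.log s) 1) ^ (-2 : ℝ) ≤ 1 :=
      Real.rpow_le_one_of_one_le_of_nonpos hmax (by norm_num)
    have ha0 : 0 ≤ a := by rw [ha_def]; positivity
    have ha2 : a ≤ 1/2 := by rw [ha_def]; nlinarith
    rw [Gneg_big hs1, Gpos_big hs1, ← ha_def]
    have h2 : (1 : ENNReal) - ENNReal.ofReal (1 - a) = ENNReal.ofReal a := by
      rw [← ENNReal.ofReal_one, ← ENNReal.ofReal_sub _ (by linarith)]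
      norm_num
    rw [h2, ← ENNReal.ofReal_add ha0 ha0]
    congr 1
    rw [Haux, if_neg h1]
    have hsm' : s ^ (-m : ℝ) = t⁻¹ := by
      rw [hs_def, ← Real.rpow_mul ht.le]
      rw [show (1/m) * (-m) = -1 by field_simp, Real.rpow_neg_one]
    have hlog : Real.log s = Real.log t / m := by rw [hs_def, Real.log_rpow ht]; ring
    calc a + a = s ^ (-m) * (max (Real.log s) 1) ^ (-2 : ℝ) := by rw [ha_def]; ring
      _ = t⁻¹ * (max (Real.log t / m) 1) ^ (-2 : ℝ) := by rw [hsm', hlog]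

lemma lintegral_Haux (m : ℝ) (hm : 2 < m) :
    ∫⁻ t in Set.Ioi (0:ℝ), ENNReal.ofReal (Haux m t) = ENNReal.ofReal (1 + 2 * m) := by
  have hm0 : (0:ℝ) < m := by linarith
  have hneg2 : ∀ x : ℝ, 0 ≤ x → x ^ (-2 : ℝ) = (x ^ 2)⁻¹ := fun x hx => by
    rw [Real.rpow_neg hx, ← Real.rpow_natCast x 2]
    norm_num
  set E := Real.exp m with hE_def
  have hE1 : 1 < E := by
    calc (1:ℝ) = Real.exp 0 := Real.exp_zero.symm
      _ < E := Real.exp_lt_exp.mpr hm0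
  have hlogE : Real.log E = m := Real.log_exp m
  set f : ℝ → ℝ := fun t => t⁻¹ * (max (Real.log t / m) 1) ^ (-2 : ℝ) with hf_def
  have hf_nonneg : ∀ t : ℝ, 0 < t → 0 ≤ f t := fun t ht => by
    have : (0:ℝ) ≤ max (Real.log t / m) 1 := le_trans zero_le_one (le_max_right _ _)
    exact mul_nonneg (inv_nonneg.mpr ht.le) (Real.rpow_nonneg this _)
  -- value of f on (1, E]
  have hf_eq1 : ∀ t ∈ Set.Ioc (1:ℝ) E, f t = t⁻¹ := by
    intro t ht
    have h1 : Real.log t ≤ m := by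
      rw [← hlogE]; exact Real.log_le_log (by linarith [ht.1]) ht.2
    have h2 : max (Real.log t / m) 1 = 1 :=
      max_eq_right (by rw [div_le_one hm0]; exact h1)
    rw [hf_def]; simp [h2, Real.one_rpow]
  -- integrable and value on (1, E]
  have hIcc : ∀ x : ℝ, x ∈ Set.uIcc (1:ℝ) E → x ≠ 0 := fun x hx => by
    rw [Set.uIcc_of_le hE1.le] at hx
    have := hx.1; positivity
  have hint1 : IntegrableOn (fun t : ℝ => t⁻¹) (Set.Ioc 1 E) := by
    rw [← intervalIntegrable_iff_integrableOn_Ioc_of_le hE1.le]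
    exact intervalIntegral.intervalIntegrable_inv hIcc continuousOn_id
  have hval1 : ∫ t in Set.Ioc (1:ℝ) E, t⁻¹ = m := by
    rw [← intervalIntegral.integral_of_le hE1.le, integral_inv_of_pos one_pos (by linarith),
      div_one, hlogE]
  have hint1' : IntegrableOn f (Set.Ioc 1 E) :=
    hint1.congr_fun (fun t ht => (hf_eq1 t ht).symm) measurableSet_Ioc
  have hval1' : ∫ t in Set.Ioc (1:ℝ) E, f t = m := by
    rw [setIntegral_congr_fun measurableSet_Ioc hf_eq1, hval1]
  -- the piece on (E, ∞)
  set F : ℝ → ℝ := fun t => -(m^2) * (Real.log t)⁻¹ with hF_def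
  have hcont : ContinuousWithinAt F (Set.Ici E) E := by
    refine ContinuousAt.continuousWithinAt ?_
    have h1 : ContinuousAt Real.log E := Real.continuousAt_log (by positivity)
    exact (h1.inv₀ (by rw [hlogE]; positivity)).const_mul _
  have hderiv : ∀ x ∈ Set.Ioi E, HasDerivAt F (f x) x := by
    intro x hx
    have hx0 : (0:ℝ) < x := by simp only [Set.mem_Ioi] at hx; linarith
    have hlogx : m < Real.log x := by
      rw [← hlogE]
      exact Real.log_lt_log (by positivity) hx
    have hlogx0 : (0:ℝ) < Real.log x := by linarith
    have h1 : HasDerivAt Real.log x⁻¹ x := Real.hasDerivAt_log (ne_of_gt hx0)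
    have h2 : HasDerivAt (fun t : ℝ => (Real.log t)⁻¹)
        (-(x⁻¹) / (Real.log x) ^ 2) x := h1.inv (ne_of_gt hlogx0)
    have h3 := h2.const_mul (-(m^2))
    refine h3.congr_deriv ?_
    symm
    have hmx : max (Real.log x / m) 1 = Real.log x / m :=
      max_eq_left ((one_le_div hm0).mpr hlogx.le)
    rw [hf_def]
    simp only [hmx]
    rw [hneg2 _ (by positivity)]
    field_simp
  have hf_nonneg' : ∀ x ∈ Set.Ioi E, 0 ≤ f x := fun x hx =>
    hf_nonneg x (by simp only [Set.mem_Ioi] at hx; linarith)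
  have htends : Tendsto F atTop (nhds 0) := by
    have h1 : Tendsto (fun t : ℝ => (Real.log t)⁻¹) atTop (nhds 0) :=
      Real.tendsto_log_atTop.inv_tendsto_atTop
    have h2 := h1.const_mul (-(m^2))
    have h3 : F = fun t : ℝ => -(m ^ 2 * (Real.log t)⁻¹) := by
      funext t; rw [hF_def]; ring
    rw [h3]; simpa using h2
  have hint2 : IntegrableOn f (Set.Ioi E) :=
    integrableOn_Ioi_deriv_of_nonneg hcont hderiv hf_nonneg' htends
  have hval2 : ∫ t in Set.Ioi E, f t = m := by
    rw [integral_Ioi_of_hasDerivAt_of_nonneg hcont hderiv hf_nonneg' htends, hF_def]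
    simp only [hlogE]
    field_simp
    ring
  -- integral over (1, ∞)
  have hunion : Set.Ioc (1:ℝ) E ∪ Set.Ioi E = Set.Ioi 1 := Set.Ioc_union_Ioi_eq_Ioi hE1.le
  have hintIoi : IntegrableOn f (Set.Ioi 1) := by
    rw [← hunion]; exact hint1'.union hint2
  have hvalIoi : ∫ t in Set.Ioi (1:ℝ), f t = 2 * m := by
    rw [← hunion, setIntegral_union (Set.Ioc_disjoint_Ioi le_rfl) measurableSet_Ioi hint1' hint2,
      hval1', hval2]
    ring
  -- lintegral over (1, ∞)
  have hlint2 : ∫⁻ t in Set.Ioi (1:ℝ), ENNReal.ofReal (Haux m t) = ENNReal.ofReal (2 * m) := by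
    have hcongr : ∫⁻ t in Set.Ioi (1:ℝ), ENNReal.ofReal (Haux m t)
        = ∫⁻ t in Set.Ioi (1:ℝ), ENNReal.ofReal (f t) := by
      refine setLIntegral_congr_fun measurableSet_Ioi (fun t ht => ?_)
      simp only [Set.mem_Ioi] at ht
      rw [Haux, if_neg (by linarith)]
    rw [hcongr, ← ofReal_integral_eq_lintegral_ofReal hintIoi ?_, hvalIoi]
    filter_upwards [ae_restrict_mem measurableSet_Ioi] with t ht
    exact hf_nonneg t (by simp only [Set.mem_Ioi] at ht; linarith)
  -- lintegral over (0, 1]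
  have hlint1 : ∫⁻ t in Set.Ioc (0:ℝ) 1, ENNReal.ofReal (Haux m t) = 1 := by
    have hcongr : ∫⁻ t in Set.Ioc (0:ℝ) 1, ENNReal.ofReal (Haux m t)
        = ∫⁻ _ in Set.Ioc (0:ℝ) 1, 1 := by
      refine setLIntegral_congr_fun measurableSet_Ioc (fun t ht => ?_)
      rw [Haux, if_pos ht.2, ENNReal.ofReal_one]
    rw [hcongr, setLIntegral_one, Real.volume_Ioc]
    norm_num
  rw [← Set.Ioc_union_Ioi_eq_Ioi (zero_le_one (α := ℝ)),
    lintegral_union measurableSet_Ioi (Set.Ioc_disjoint_Ioi le_rfl), hlint1, hlint2,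
    ← ENNReal.ofReal_one, ← ENNReal.ofReal_add (by norm_num) (by linarith)]

theorem stmt1 (m : ℝ) (hm : 2 < m) (μ : Measure ℝ) [IsProbabilityMeasure μ]
    (hcdf : ∀ x : ℝ, (μ (Set.Iic x)).toReal = G m x) :
    ∫ x, |x| ^ m ∂μ = 1 + 2 * m := by
  have hm0 : (0:ℝ) < m := by linarith
  have hnn : 0 ≤ᵐ[μ] fun x : ℝ => |x| ^ m :=
    Filter.Eventually.of_forall fun x => Real.rpow_nonneg (abs_nonneg x) m
  have hmble : AEMeasurable (fun x : ℝ => |x| ^ m) μ := by fun_prop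
  rw [MeasureTheory.integral_eq_lintegral_of_nonneg_ae hnn hmble.aestronglyMeasurable,
    lintegral_eq_lintegral_meas_le μ hnn hmble]
  have hS : Set.Countable {s : ℝ | 0 < μ {s}} := by
    have := MeasureTheory.Measure.countable_meas_level_set_pos (μ := μ) (g := fun x : ℝ => x)
      measurable_id
    simpa [Set.setOf_eq_eq_singleton'] using this
  have hT : Set.Countable ((fun s : ℝ => s ^ m) '' {s : ℝ | 0 < μ {s}}) := hS.image _
  have hT0 : volume ((fun s : ℝ => s ^ m) '' {s : ℝ | 0 < μ {s}}) = 0 :=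
    hT.measure_zero _
  have h1 : ∀ᵐ t ∂(volume.restrict (Set.Ioi (0:ℝ))),
      t ∉ (fun s : ℝ => s ^ m) '' {s : ℝ | 0 < μ {s}} :=
    ae_restrict_of_ae ((MeasureTheory.measure_eq_zero_iff_ae_notMem (μ := volume)).mp hT0)
  have h2 : ∀ᵐ t ∂(volume.restrict (Set.Ioi (0:ℝ))), t ∈ Set.Ioi (0:ℝ) :=
    ae_restrict_mem measurableSet_Ioi
  have hae : ∀ᵐ t ∂(volume.restrict (Set.Ioi (0:ℝ))),
      μ {x : ℝ | t ≤ |x| ^ m} = ENNReal.ofReal (Haux m t) := by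
    filter_upwards [h1, h2] with t hnT ht
    refine tail_formula m hm μ hcdf ht ?_
    by_contra h
    refine hnT ⟨t ^ (1/m : ℝ), pos_iff_ne_zero.mpr h, ?_⟩
    show (t ^ (1/m : ℝ)) ^ m = t
    rw [← Real.rpow_mul (le_of_lt ht), one_div, inv_mul_cancel₀ (by linarith), Real.rpow_one]
  rw [lintegral_congr_ae hae, lintegral_Haux m hm, ENNReal.toReal_ofReal (by positivity)]
end

section
/- For m > 2 and any δ > 0, the measure μ_{G_m} does not possess a finite (m+δ)-th absolute moment: ∫ |x|^{m+δ} dμ_{G_m}(x) = ∞. -/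
open Real Filter MeasureTheory

theorem stmt2 (m : ℝ) (hm : 2 < m) (δ : ℝ) (hδ : 0 < δ)
    (μ : Measure ℝ) [IsProbabilityMeasure μ]
    (hcdf : ∀ x : ℝ, (μ (Set.Iic x)).toReal = G m x) :
    ∫⁻ x, ENNReal.ofReal (|x| ^ (m + δ)) ∂μ = ⊤ := by
  -- tail measure formula
  have hIoi : ∀ t : ℝ, Real.exp 1 ≤ t →
      (μ (Set.Ioi t)).toReal = (1/2) * t ^ (-m) * (Real.log t) ^ (-2 : ℝ) := by
    intro t ht
    have ht1 : (1 : ℝ) < t := lt_of_lt_of_le (by linarith [Real.exp_one_gt_d9]) ht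
    have hlog : (1 : ℝ) ≤ Real.log t := by
      rw [← Real.log_exp 1]
      exact Real.log_le_log (Real.exp_pos 1) ht
    have hcompl : Set.Ioi t = (Set.Iic t)ᶜ := by
      ext x; simp [not_le]
    have hμc : μ (Set.Ioi t) = 1 - μ (Set.Iic t) := by
      rw [hcompl, measure_compl measurableSet_Iic (measure_ne_top μ _), measure_univ]
    have hfin : μ (Set.Iic t) ≠ ⊤ := measure_ne_top μ _
    have hle : μ (Set.Iic t) ≤ 1 := by
      rw [← measure_univ (μ := μ)]; exact measure_mono (Set.subset_univ _)
    have : (μ (Set.Ioi t)).toReal = 1 - (μ (Set.Iic t)).toReal := by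
      rw [hμc, ENNReal.toReal_sub_of_le hle ENNReal.one_ne_top, ENNReal.toReal_one]
    rw [this, hcdf t]
    have h1 : ¬ t ≤ -1 := by linarith
    have h2 : ¬ t < 1 := by linarith
    rw [G, if_neg h1, if_neg h2, max_eq_left hlog]
    ring
  -- lower bound for the integral
  have hbound : ∀ t : ℝ, Real.exp 1 ≤ t →
      ENNReal.ofReal ((1/2) * t ^ δ * (Real.log t) ^ (-2 : ℝ)) ≤
        ∫⁻ x, ENNReal.ofReal (|x| ^ (m + δ)) ∂μ := by
    intro t ht
    have ht0 : (0 : ℝ) < t := lt_of_lt_of_le (Real.exp_pos 1) ht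
    have key : ENNReal.ofReal (t ^ (m + δ)) * μ (Set.Ioi t) ≤
        ∫⁻ x, ENNReal.ofReal (|x| ^ (m + δ)) ∂μ := by
      calc ENNReal.ofReal (t ^ (m + δ)) * μ (Set.Ioi t)
          = ∫⁻ _ in Set.Ioi t, ENNReal.ofReal (t ^ (m + δ)) ∂μ := by
            simp [setLIntegral_const]
        _ ≤ ∫⁻ x in Set.Ioi t, ENNReal.ofReal (|x| ^ (m + δ)) ∂μ := by
            refine setLIntegral_mono (by fun_prop) ?_
            intro x hx
            have hx' : t ≤ x := le_of_lt hx
            have hxt : t ≤ |x| := hx'.trans (le_abs_self x)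
            exact ENNReal.ofReal_le_ofReal
              (Real.rpow_le_rpow ht0.le hxt (by linarith))
        _ ≤ ∫⁻ x, ENNReal.ofReal (|x| ^ (m + δ)) ∂μ :=
            setLIntegral_le_lintegral _ _
    have hμt : μ (Set.Ioi t) =
        ENNReal.ofReal ((1/2) * t ^ (-m) * (Real.log t) ^ (-2 : ℝ)) := by
      rw [← hIoi t ht, ENNReal.ofReal_toReal (measure_ne_top μ _)]
    rw [hμt, ← ENNReal.ofReal_mul (by positivity)] at key
    have harith : t ^ (m + δ) * ((1/2) * t ^ (-m) * (Real.log t) ^ (-2 : ℝ)) =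
        (1/2) * t ^ δ * (Real.log t) ^ (-2 : ℝ) := by
      have : t ^ (m + δ) * t ^ (-m) = t ^ δ := by
        rw [← Real.rpow_add ht0]; ring_nf
      calc t ^ (m + δ) * ((1/2) * t ^ (-m) * (Real.log t) ^ (-2 : ℝ))
          = (1/2) * (t ^ (m + δ) * t ^ (-m)) * (Real.log t) ^ (-2 : ℝ) := by ring
        _ = (1/2) * t ^ δ * (Real.log t) ^ (-2 : ℝ) := by rw [this]
    rwa [harith] at key
  -- the lower bound tends to infinity
  rw [eq_top_iff, ← ENNReal.iSup_natCast]
  rw [iSup_le_iff]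
  intro n
  -- find t with (1/2) * t^δ * (log t)^(-2) ≥ n
  have hlittle : (fun x : ℝ => Real.log x ^ (2 : ℝ)) =o[atTop] fun x => x ^ δ :=
    isLittleO_log_rpow_rpow_atTop 2 hδ
  have hc : (0 : ℝ) < 1 / (2 * (n + 1)) := by positivity
  have hev := (hlittle.def hc).and (eventually_ge_atTop (Real.exp 1))
  obtain ⟨t, hO, ht⟩ := hev.exists
  have ht0 : (0 : ℝ) < t := lt_of_lt_of_le (Real.exp_pos 1) ht
  have hlog1 : (1 : ℝ) ≤ Real.log t := by
    rw [← Real.log_exp 1]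
    exact Real.log_le_log (Real.exp_pos 1) ht
  have hlogpos : (0 : ℝ) < Real.log t := by linarith
  have htpow : (0 : ℝ) < t ^ δ := Real.rpow_pos_of_pos ht0 δ
  -- from the littleO bound: log t ^ 2 ≤ t ^ δ / (2 (n+1))
  have hO' : Real.log t ^ (2 : ℝ) ≤ 1 / (2 * (n + 1)) * t ^ δ := by
    have h1 : ‖Real.log t ^ (2 : ℝ)‖ = Real.log t ^ (2 : ℝ) :=
      Real.norm_of_nonneg (Real.rpow_nonneg hlogpos.le _)
    have h2 : ‖t ^ δ‖ = t ^ δ := Real.norm_of_nonneg htpow.le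
    rw [h1, h2] at hO
    exact hO
  have hlogsq : (0 : ℝ) < Real.log t ^ (2 : ℝ) := Real.rpow_pos_of_pos hlogpos _
  have hval : (n : ℝ) ≤ (1/2) * t ^ δ * (Real.log t) ^ (-2 : ℝ) := by
    have hinv : (Real.log t) ^ (-2 : ℝ) = (Real.log t ^ (2 : ℝ))⁻¹ := by
      rw [Real.rpow_neg hlogpos.le]
    rw [hinv]
    have : (n : ℝ) * (Real.log t ^ (2 : ℝ)) ≤ (1/2) * t ^ δ := by
      calc (n : ℝ) * (Real.log t ^ (2 : ℝ))
          ≤ (n : ℝ) * (1 / (2 * (n + 1)) * t ^ δ) := by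
            exact mul_le_mul_of_nonneg_left hO' (Nat.cast_nonneg n)
        _ ≤ (1/2) * t ^ δ := by
            rw [← mul_assoc]
            apply mul_le_mul_of_nonneg_right _ htpow.le
            rw [mul_one_div, div_le_div_iff₀ (by positivity) (by norm_num)]
            push_cast; nlinarith [Nat.cast_nonneg (α := ℝ) n]
    calc (n : ℝ) = (n : ℝ) * (Real.log t ^ (2 : ℝ)) * (Real.log t ^ (2 : ℝ))⁻¹ := by
          field_simp
      _ ≤ (1/2) * t ^ δ * (Real.log t ^ (2 : ℝ))⁻¹ := by
          exact mul_le_mul_of_nonneg_right this (by positivity)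
  refine le_trans ?_ (hbound t ht)
  rw [← ENNReal.ofReal_natCast]
  exact ENNReal.ofReal_le_ofReal hval
end
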